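/- Let q : ℝ^2 → ℂ be continuous and integrable, and assume its Fourier transform q̂ is integrable and satisfies ∫_{ℝ^2} (1+‖ξ‖^2)^2 |q̂(ξ)|^2 dξ < ∞. With ‖q‖_{H^2} := (2π)^{-2} ( ∫_{ℝ^2} (1+‖ξ‖^2)^2 |q̂(ξ)|^2 dξ )^{1/2} and ‖q‖_{L^2} := (2π)^{-2} ( ∫_{ℝ^2} |q̂(ξ)|^2 dξ )^{1/2}, for every z ∈ ℝ^2 and all 0 < k_min ≤ k_max, | q(z) − (2π)^{-2} ∫_{k_min ≤ ‖ξ‖ ≤ k_max} q̂(ξ) e^{i⟨z,ξ⟩} dξ | ≤ √π ( k_max^{-1} ‖q‖_{H^2} + k_min ‖q‖_{L^2} ). In particular the truncated indicator I^∞_K satisfies |I^∞_K(z) − q(z)| = O(k_max^{-1}) + O(k_min). -/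

import Mathlib

open MeasureTheory

section Aux
open Real Set FourierTransform

noncomputable section
abbrev E2 := EuclideanSpace ℝ (Fin 2)

lemma my_cs {α : Type*} [MeasurableSpace α] {μ : Measure α} {f g : α → ℝ}
    (hf0 : ∀ x, 0 ≤ f x) (hg0 : ∀ x, 0 ≤ g x)
    (hf2 : Integrable (fun x => f x ^ 2) μ) (hg2 : Integrable (fun x => g x ^ 2) μ)
    (hfg : AEStronglyMeasurable (fun x => f x * g x) μ) :
    ∫ x, f x * g x ∂μ ≤ Real.sqrt (∫ x, f x ^ 2 ∂μ) * Real.sqrt (∫ x, g x ^ 2 ∂μ) := by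
  have hfgint : Integrable (fun x => f x * g x) μ := by
    refine Integrable.mono' ((hf2.add hg2).div_const 2) hfg ?_
    filter_upwards with x
    simp only [Pi.add_apply]
    rw [Real.norm_eq_abs, abs_of_nonneg (mul_nonneg (hf0 x) (hg0 x))]
    nlinarith [sq_nonneg (f x - g x)]
  set A := ∫ x, f x ^ 2 ∂μ with hA
  set B := ∫ x, g x ^ 2 ∂μ with hB
  have hA0 : 0 ≤ A := integral_nonneg fun x => sq_nonneg _
  have hB0 : 0 ≤ B := integral_nonneg fun x => sq_nonneg _
  have hzero : ∀ {h k : α → ℝ}, (∀ x, 0 ≤ h x) → (∀ x, 0 ≤ k x) →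
      Integrable (fun x => h x ^ 2) μ → (∫ x, h x ^ 2 ∂μ) = 0 →
      AEStronglyMeasurable (fun x => h x * k x) μ → (∫ x, h x * k x ∂μ) = 0 := by
    intro h k h0 k0 h2 hint hm
    have : (fun x => h x ^ 2) =ᵐ[μ] 0 :=
      (integral_eq_zero_iff_of_nonneg (fun x => sq_nonneg _) h2).1 hint
    have hh : (fun x => h x * k x) =ᵐ[μ] 0 := by
      filter_upwards [this] with x hx
      have : h x = 0 := by
        have := hx
        simpa [pow_eq_zero_iff] using hx
      simp [this]
    rw [integral_congr_ae hh]; simp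
  rcases eq_or_lt_of_le hA0 with hA' | hA'
  · rw [hzero hf0 hg0 hf2 hA'.symm hfg]
    positivity
  rcases eq_or_lt_of_le hB0 with hB' | hB'
  · have : (∫ x, f x * g x ∂μ) = 0 := by
      have := hzero hg0 hf0 hg2 hB'.symm (hfg.congr (by filter_upwards with x; ring))
      rw [← this]
      exact integral_congr_ae (by filter_upwards with x; ring)
    rw [this]; positivity
  set t := Real.sqrt B / Real.sqrt A with ht
  have htpos : 0 < t := div_pos (Real.sqrt_pos.2 hB') (Real.sqrt_pos.2 hA')
  have key : ∀ x, f x * g x ≤ (t * f x ^ 2 + t⁻¹ * g x ^ 2) / 2 := by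
    intro x
    have h1 : Real.sqrt t * Real.sqrt t = t := Real.mul_self_sqrt htpos.le
    have h2 : Real.sqrt t⁻¹ * Real.sqrt t⁻¹ = t⁻¹ := Real.mul_self_sqrt (by positivity)
    have h3 : Real.sqrt t * Real.sqrt t⁻¹ = 1 := by
      rw [← Real.sqrt_mul htpos.le, mul_inv_cancel₀ htpos.ne', Real.sqrt_one]
    have e : t * f x ^ 2 - 2 * (f x * g x) + t⁻¹ * g x ^ 2 =
        (Real.sqrt t * f x - Real.sqrt t⁻¹ * g x) ^ 2 := by
      have expand : (Real.sqrt t * f x - Real.sqrt t⁻¹ * g x) ^ 2 =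
          (Real.sqrt t * Real.sqrt t) * f x ^ 2 -
            2 * (Real.sqrt t * Real.sqrt t⁻¹) * (f x * g x) +
            (Real.sqrt t⁻¹ * Real.sqrt t⁻¹) * g x ^ 2 := by ring
      rw [expand, h1, h2, h3]; ring
    linarith [sq_nonneg (Real.sqrt t * f x - Real.sqrt t⁻¹ * g x), e]
  have step : ∫ x, f x * g x ∂μ ≤ (t * A + t⁻¹ * B) / 2 := by
    have := integral_mono hfgint (((hf2.const_mul t).add (hg2.const_mul t⁻¹)).div_const 2) key
    simp only [Pi.add_apply] at this
    rwa [integral_div, integral_add (hf2.const_mul t) (hg2.const_mul t⁻¹),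
      integral_const_mul, integral_const_mul] at this
  have hfin : (t * A + t⁻¹ * B) / 2 = Real.sqrt A * Real.sqrt B := by
    have hsA : Real.sqrt A * Real.sqrt A = A := Real.mul_self_sqrt hA0
    have hsB : Real.sqrt B * Real.sqrt B = B := Real.mul_self_sqrt hB0
    have hsA' : Real.sqrt A ≠ 0 := (Real.sqrt_pos.2 hA').ne'
    have hsB' : Real.sqrt B ≠ 0 := (Real.sqrt_pos.2 hB').ne'
    have h4 : t * A = Real.sqrt A * Real.sqrt B := by
      rw [ht, div_mul_eq_mul_div, div_eq_iff hsA']; linear_combination (-(Real.sqrt B)) * hsA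
    have h5 : t⁻¹ * B = Real.sqrt A * Real.sqrt B := by
      rw [ht, inv_div, div_mul_eq_mul_div, div_eq_iff hsB']; linear_combination (-(Real.sqrt A)) * hsB
    rw [h4, h5]; ring
  linarith


lemma weight_integrable :
    Integrable (fun x : E2 => (((1:ℝ) + ‖x‖ ^ 2)⁻¹) ^ 2) := by
  have base : Integrable (fun x : E2 => (16:ℝ) * (1 + ‖x‖) ^ (-(3:ℝ))) :=
    (integrable_one_add_norm (by simp [finrank_euclideanSpace]; norm_num)).const_mul 16
  refine base.mono' ?_ ?_
  · apply Continuous.aestronglyMeasurable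
    have h : ∀ x : E2, (1:ℝ) + ‖x‖ ^ 2 ≠ 0 := fun x => by positivity
    fun_prop (disch := intro x; positivity)
  · filter_upwards with x
    set n := ‖x‖ with hn
    have hn0 : 0 ≤ n := norm_nonneg _
    have h1 : (0:ℝ) < 1 + n := by positivity
    have h2 : (0:ℝ) < 1 + n ^ 2 := by positivity
    rw [Real.norm_eq_abs, abs_of_nonneg (by positivity)]
    have hr : (1 + n) ^ (-(3:ℝ)) = ((1 + n) ^ (3:ℕ))⁻¹ := by
      rw [← Real.rpow_natCast (1 + n) 3, ← Real.rpow_neg h1.le]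
      norm_num
    rw [hr]
    rw [← one_div ((1:ℝ)+n^2), ← one_div ((1+n)^3), mul_one_div, div_pow, one_pow, div_le_div_iff₀ (by positivity) (by positivity)]
    nlinarith [sq_nonneg (1 - n), sq_nonneg n, sq_nonneg (n*(1-n)), sq_nonneg (n*n)]

lemma tail_integral {k : ℝ} (hk : 0 < k) :
    ∫ ξ in {ξ : E2 | k < ‖ξ‖}, (((1:ℝ) + ‖ξ‖ ^ 2)⁻¹) ^ 2 ≤ Real.pi * (k⁻¹) ^ 2 := by
  -- 1D improper integral
  have h1d : ∫ r in Ioi k, r * (((1:ℝ) + r ^ 2)⁻¹) ^ 2 = (2 * (1 + k ^ 2))⁻¹ := by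
    have hderiv : ∀ r ∈ Ioi k, HasDerivAt (fun r : ℝ => -(2⁻¹ * ((1:ℝ) + r ^ 2)⁻¹))
        (r * (((1:ℝ) + r ^ 2)⁻¹) ^ 2) r := by
      intro r _
      have h2 : (0:ℝ) < 1 + r ^ 2 := by positivity
      have hd : HasDerivAt (fun r : ℝ => (1:ℝ) + r ^ 2) (2 * r) r := by
        simpa using ((hasDerivAt_pow 2 r).const_add 1)
      have := (hd.inv h2.ne').const_mul (-(2⁻¹ : ℝ))
      have heq : (fun r : ℝ => -(2⁻¹ * ((1:ℝ) + r ^ 2)⁻¹)) = fun y : ℝ => -2⁻¹ * ((1:ℝ) + y ^ 2)⁻¹ := by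
        funext y; ring
      rw [heq]
      refine this.congr_deriv ?_
      rw [inv_pow]
      field_simp
    have htend : Filter.Tendsto (fun r : ℝ => -(2⁻¹ * ((1:ℝ) + r ^ 2)⁻¹))
        Filter.atTop (nhds 0) := by
      have h1 : Filter.Tendsto (fun r : ℝ => (1:ℝ) + r ^ 2) Filter.atTop Filter.atTop :=
        Filter.tendsto_atTop_add_const_left _ 1 (Filter.tendsto_pow_atTop (by norm_num))
      have := (tendsto_inv_atTop_zero.comp h1).const_mul (2⁻¹ : ℝ)
      simpa using this.neg
    have hcont : ContinuousWithinAt (fun r : ℝ => -(2⁻¹ * ((1:ℝ) + r ^ 2)⁻¹)) (Ici k) k := by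
      apply Continuous.continuousWithinAt
      fun_prop (disch := intro x; positivity)
    have := integral_Ioi_of_hasDerivAt_of_nonneg hcont hderiv
      (fun r hr => by
        have : (0:ℝ) < r := hk.trans hr
        positivity) htend
    rw [this]
    have h2 : (0:ℝ) < 1 + k ^ 2 := by positivity
    field_simp
    ring
  have hmeas : MeasurableSet {ξ : E2 | k < ‖ξ‖} :=
    (isOpen_lt continuous_const continuous_norm).measurableSet
  have hpolar := MeasureTheory.integral_fun_norm_addHaar (volume : Measure E2)
    (fun r : ℝ => (Ioi k).indicator (fun r : ℝ => (((1:ℝ) + r ^ 2)⁻¹) ^ 2) r)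
  have hdim : Module.finrank ℝ E2 = 2 := finrank_euclideanSpace_fin
  rw [hdim] at hpolar
  have hL : (∫ x : E2, (Ioi k).indicator (fun r : ℝ => (((1:ℝ) + r ^ 2)⁻¹) ^ 2) ‖x‖)
      = ∫ ξ in {ξ : E2 | k < ‖ξ‖}, (((1:ℝ) + ‖ξ‖ ^ 2)⁻¹) ^ 2 := by
    rw [← integral_indicator hmeas]
    refine integral_congr_ae (Filter.Eventually.of_forall fun x => ?_)
    by_cases hx : k < ‖x‖ <;> simp [Set.indicator, hx]
  have hR : (∫ y in Ioi (0:ℝ), y ^ (2 - 1) •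
        (Ioi k).indicator (fun r : ℝ => (((1:ℝ) + r ^ 2)⁻¹) ^ 2) y)
      = ∫ r in Ioi k, r * (((1:ℝ) + r ^ 2)⁻¹) ^ 2 := by
    have hpt : ∀ y : ℝ, y ^ (2 - 1) •
        (Ioi k).indicator (fun r : ℝ => (((1:ℝ) + r ^ 2)⁻¹) ^ 2) y
        = (Ioi k).indicator (fun r : ℝ => r * (((1:ℝ) + r ^ 2)⁻¹) ^ 2) y := by
      intro y
      by_cases hy : y ∈ Ioi k <;> simp [Set.indicator, hy]
    simp only [hpt]
    rw [setIntegral_indicator measurableSet_Ioi, Set.Ioi_inter_Ioi, max_eq_right hk.le]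
  have hball : (volume : Measure E2).real (Metric.ball 0 1) = Real.pi := by
    rw [measureReal_def, EuclideanSpace.volume_ball]
    norm_num [Real.sq_sqrt Real.pi_nonneg, ENNReal.toReal_ofReal Real.pi_nonneg]
  rw [hL, hR, h1d, hball] at hpolar
  rw [hpolar]
  simp only [nsmul_eq_mul, smul_eq_mul, Nat.cast_ofNat]
  have h2 : (0:ℝ) < 1 + k ^ 2 := by positivity
  have heq : 2 * (Real.pi * (2 * (1 + k ^ 2))⁻¹) = Real.pi * ((1 + k ^ 2))⁻¹ := by
    field_simp
  rw [heq, inv_pow]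
  gcongr
  all_goals first
  | positivity
  | nlinarith


lemma inversion_step (q : E2 → ℂ) (hq_cont : Continuous q) (hq_int : Integrable q)
    (hqhat_int : Integrable (fun ξ : E2 =>
      ∫ y, q y * Complex.exp (-(Complex.I * ((inner ℝ ξ y : ℝ) : ℂ)))))
    (z : E2) :
    q z = (((2 * Real.pi : ℝ) ^ 2)⁻¹ : ℝ) • ∫ ξ : E2,
      (∫ y, q y * Complex.exp (-(Complex.I * ((inner ℝ ξ y : ℝ) : ℂ)))) *
        Complex.exp (Complex.I * ((inner ℝ z ξ : ℝ) : ℂ)) := by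
  set F : E2 → ℂ := fun ξ => ∫ y, q y * Complex.exp (-(Complex.I * ((inner ℝ ξ y : ℝ) : ℂ)))
    with hFdef
  have h2π : (2 * Real.pi) ≠ 0 := by positivity
  have hFq : ∀ ξ : E2, F ξ = 𝓕 q ((2 * Real.pi)⁻¹ • ξ) := by
    intro ξ
    rw [hFdef, Real.fourier_eq']
    refine integral_congr_ae (Filter.Eventually.of_forall fun v => ?_)
    have hc : -2 * Real.pi * (inner ℝ v ((2 * Real.pi)⁻¹ • ξ) : ℝ) = -(inner ℝ ξ v : ℝ) := by
      rw [real_inner_smul_right, real_inner_comm]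
      field_simp
    simp only [hc, smul_eq_mul]
    rw [mul_comm]
    congr 1
    push_cast
    ring
  have h𝓕int : Integrable (𝓕 q) := by
    have h := hqhat_int.comp_smul (R := 2 * Real.pi) h2π
    refine h.congr (Filter.Eventually.of_forall fun w => ?_)
    show F ((2 * Real.pi) • w) = 𝓕 q w
    rw [hFq, smul_smul, inv_mul_cancel₀ h2π, one_smul]
  have hinv : 𝓕⁻ (𝓕 q) z = q z := hq_int.fourierInv_fourier_eq h𝓕int hq_cont.continuousAt
  set G : E2 → ℂ := fun w => Complex.exp (((2 * Real.pi * (inner ℝ w z : ℝ) : ℝ) : ℂ) * Complex.I)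
      • 𝓕 q w with hGdef
  have hG : ∫ w, G w = q z := by
    rw [← hinv, Real.fourierInv_eq']
  have hGpt : ∀ ξ : E2, G ((2 * Real.pi)⁻¹ • ξ) =
      F ξ * Complex.exp (Complex.I * ((inner ℝ z ξ : ℝ) : ℂ)) := by
    intro ξ
    rw [hGdef]
    simp only
    have hc : 2 * Real.pi * (inner ℝ ((2 * Real.pi)⁻¹ • ξ) z : ℝ) = (inner ℝ z ξ : ℝ) := by
      rw [real_inner_smul_left, real_inner_comm]
      field_simp
    rw [hc, ← hFq ξ, smul_eq_mul, mul_comm]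
    congr 1
    ring
  have hcv := MeasureTheory.Measure.integral_comp_smul (volume : Measure E2) G
    ((2 * Real.pi)⁻¹)
  rw [finrank_euclideanSpace_fin] at hcv
  have habs : |(((2 * Real.pi)⁻¹ : ℝ) ^ 2)⁻¹| = (2 * Real.pi) ^ 2 := by
    rw [abs_of_pos (by positivity), inv_pow, inv_inv]
  simp only [hGpt] at hcv
  rw [hG] at hcv
  rw [hcv, habs, smul_smul]
  rw [inv_mul_cancel₀ (by positivity), one_smul]

end
end Aux

section Main
open Real Set FourierTransform
/-- 2D resolution bound for the truncated far-field indicator: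
`|q(z) - (2π)^{-2} ∫_{kmin ≤ ‖ξ‖ ≤ kmax} q̂(ξ) e^{i⟨z,ξ⟩} dξ|
  ≤ √π (kmax⁻¹ ‖q‖_{H²} + kmin ‖q‖_{L²})`,
where `q̂(ξ) = ∫ q(y) e^{-i⟨ξ,y⟩} dy`. -/
theorem resolution_bound_2D (q : EuclideanSpace ℝ (Fin 2) → ℂ)
    (hq_cont : Continuous q) (hq_int : Integrable q)
    (hqhat_int : Integrable (fun ξ : EuclideanSpace ℝ (Fin 2) =>
      ∫ y, q y * Complex.exp (-(Complex.I * ((inner ℝ ξ y : ℝ) : ℂ)))))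
    (hH2 : Integrable (fun ξ : EuclideanSpace ℝ (Fin 2) => (1 + ‖ξ‖ ^ 2) ^ 2 *
      ‖∫ y, q y * Complex.exp (-(Complex.I * ((inner ℝ ξ y : ℝ) : ℂ)))‖ ^ 2))
    (z : EuclideanSpace ℝ (Fin 2)) (kmin kmax : ℝ) (hkmin : 0 < kmin) (hk : kmin ≤ kmax) :
    ‖q z - ((2 * Real.pi : ℂ) ^ 2)⁻¹ *
        (∫ ξ in {ξ : EuclideanSpace ℝ (Fin 2) | kmin ≤ ‖ξ‖ ∧ ‖ξ‖ ≤ kmax},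
          (∫ y, q y * Complex.exp (-(Complex.I * ((inner ℝ ξ y : ℝ) : ℂ)))) *
            Complex.exp (Complex.I * ((inner ℝ z ξ : ℝ) : ℂ)))‖ ≤
      Real.sqrt Real.pi *
        (kmax⁻¹ * (((2 * Real.pi) ^ 2)⁻¹ * Real.sqrt (∫ ξ, (1 + ‖ξ‖ ^ 2) ^ 2 *
            ‖∫ y, q y * Complex.exp (-(Complex.I * ((inner ℝ ξ y : ℝ) : ℂ)))‖ ^ 2)) +
          kmin * (((2 * Real.pi) ^ 2)⁻¹ * Real.sqrt (∫ ξ,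
            ‖∫ y, q y * Complex.exp (-(Complex.I * ((inner ℝ ξ y : ℝ) : ℂ)))‖ ^ 2))) := by
  have hkmax : 0 < kmax := hkmin.trans_le hk
  set F : E2 → ℂ := fun ξ => ∫ y, q y * Complex.exp (-(Complex.I * ((inner ℝ ξ y : ℝ) : ℂ)))
    with hF
  set Φ : E2 → ℂ := fun ξ => F ξ * Complex.exp (Complex.I * ((inner ℝ z ξ : ℝ) : ℂ)) with hΦ
  set A : Set E2 := {ξ : E2 | kmin ≤ ‖ξ‖ ∧ ‖ξ‖ ≤ kmax} with hA
  set B1 : Set E2 := {ξ : E2 | ‖ξ‖ < kmin} with hB1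
  set B2 : Set E2 := {ξ : E2 | kmax < ‖ξ‖} with hB2
  show ‖q z - ((2 * Real.pi : ℂ) ^ 2)⁻¹ * ∫ ξ in A, Φ ξ‖ ≤
      Real.sqrt Real.pi *
        (kmax⁻¹ * (((2 * Real.pi) ^ 2)⁻¹ *
            Real.sqrt (∫ ξ, (1 + ‖ξ‖ ^ 2) ^ 2 * ‖F ξ‖ ^ 2)) +
          kmin * (((2 * Real.pi) ^ 2)⁻¹ * Real.sqrt (∫ ξ, ‖F ξ‖ ^ 2)))
  have hFm : AEStronglyMeasurable F volume := hqhat_int.aestronglyMeasurable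
  have hexpc : Continuous fun ξ : E2 => Complex.exp (Complex.I * ((inner ℝ z ξ : ℝ) : ℂ)) :=
    Complex.continuous_exp.comp (continuous_const.mul
      (Complex.continuous_ofReal.comp (Continuous.inner continuous_const continuous_id)))
  have hΦm : AEStronglyMeasurable Φ volume := hFm.mul hexpc.aestronglyMeasurable
  have hnorm : ∀ ξ : E2, ‖Φ ξ‖ = ‖F ξ‖ := by
    intro ξ
    rw [hΦ]
    simp only [norm_mul]
    have : ‖Complex.exp (Complex.I * ((inner ℝ z ξ : ℝ) : ℂ))‖ = 1 := by
      rw [Complex.norm_exp]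
      simp
    rw [this, mul_one]
  have hΦint : Integrable Φ := by
    refine hqhat_int.norm.mono' hΦm ?_
    filter_upwards with ξ
    exact (hnorm ξ).le
  have hAmeas : MeasurableSet A := by
    rw [hA, Set.setOf_and]
    exact ((isClosed_le continuous_const continuous_norm).measurableSet).inter
      ((isClosed_le continuous_norm continuous_const).measurableSet)
  have hB2meas : MeasurableSet B2 :=
    (isOpen_lt continuous_const continuous_norm).measurableSet
  have hAc : Aᶜ = B1 ∪ B2 := by
    ext ξ
    simp only [hA, hB1, hB2, Set.mem_compl_iff, Set.mem_setOf_eq, Set.mem_union, not_and_or,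
      not_le]
  have hdisj : Disjoint B1 B2 := by
    rw [Set.disjoint_left]
    intro ξ h1 h2
    rw [hB1, Set.mem_setOf_eq] at h1
    rw [hB2, Set.mem_setOf_eq] at h2
    linarith
  -- inversion and splitting
  have hqz := inversion_step q hq_cont hq_int hqhat_int z
  have hcast : ∀ w : ℂ, (((2 * Real.pi : ℝ) ^ 2)⁻¹ : ℝ) • w = ((2 * Real.pi : ℂ) ^ 2)⁻¹ * w := by
    intro w
    rw [Complex.real_smul]
    push_cast
    ring_nf
  have hsplitc := integral_add_compl hAmeas hΦint
  have key : q z - ((2 * Real.pi : ℂ) ^ 2)⁻¹ * ∫ ξ in A, Φ ξ =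
      ((2 * Real.pi : ℂ) ^ 2)⁻¹ * ((∫ ξ in B1, Φ ξ) + ∫ ξ in B2, Φ ξ) := by
    have h1 : q z = ((2 * Real.pi : ℂ) ^ 2)⁻¹ * ∫ ξ, Φ ξ := by
      rw [← hcast]; exact hqz
    rw [h1, ← hsplitc, hAc,
      setIntegral_union hdisj hB2meas hΦint.integrableOn hΦint.integrableOn]
    ring
  -- L² integrability
  have hL2 : Integrable (fun ξ : E2 => ‖F ξ‖ ^ 2) := by
    refine hH2.mono' ?_ ?_
    · exact (hFm.norm.mul hFm.norm).congr
        (Filter.Eventually.of_forall fun ξ => (pow_two ‖F ξ‖).symm)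
    · filter_upwards with ξ
      rw [Real.norm_eq_abs, abs_of_nonneg (by positivity)]
      nlinarith [mul_nonneg (sq_nonneg ‖ξ‖) (sq_nonneg ‖F ξ‖),
        mul_nonneg (mul_nonneg (sq_nonneg ‖ξ‖) (sq_nonneg ‖ξ‖)) (sq_nonneg ‖F ξ‖)]
  -- ball facts
  have hB1ball : B1 = Metric.ball (0 : E2) kmin := by
    ext ξ; simp [hB1, mem_ball_zero_iff]
  have hvolB1 : (volume : Measure E2).real B1 = Real.pi * kmin ^ 2 := by
    rw [measureReal_def, hB1ball, EuclideanSpace.volume_ball]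
    have hG : Real.Gamma ((Fintype.card (Fin 2) : ℝ) / 2 + 1) = 1 := by norm_num
    have hs : Real.sqrt Real.pi ^ Fintype.card (Fin 2) = Real.pi := by
      simp [Real.sq_sqrt Real.pi_nonneg]
    rw [hG, hs]
    rw [show Fintype.card (Fin 2) = 2 from rfl]
    rw [← ENNReal.ofReal_pow hkmin.le, ← ENNReal.ofReal_mul (by positivity),
      ENNReal.toReal_ofReal (by positivity)]
    ring
  have hvfin : (volume : Measure E2) B1 < ⊤ := by
    rw [hB1ball]; exact measure_ball_lt_top
  -- Cauchy–Schwarz on B1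
  have hcs1 : ∫ ξ in B1, ‖F ξ‖ ≤
      Real.sqrt (∫ ξ, ‖F ξ‖ ^ 2) * (Real.sqrt Real.pi * kmin) := by
    have hg2 : Integrable (fun _ : E2 => ((1:ℝ)) ^ 2) (volume.restrict B1) := by
      simp only [one_pow]
      exact integrableOn_const hvfin.ne
    have h := my_cs (μ := volume.restrict B1) (f := fun ξ => ‖F ξ‖) (g := fun _ => (1:ℝ))
      (fun ξ => norm_nonneg _) (fun _ => zero_le_one) hL2.restrict hg2
      (((hqhat_int.norm.aestronglyMeasurable).restrict).congr
        (Filter.Eventually.of_forall fun ξ => (mul_one _).symm))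
    simp only [mul_one, one_pow] at h
    have h1 : Real.sqrt (∫ ξ in B1, ‖F ξ‖ ^ 2) ≤ Real.sqrt (∫ ξ, ‖F ξ‖ ^ 2) :=
      Real.sqrt_le_sqrt (setIntegral_le_integral hL2
        (Filter.Eventually.of_forall fun ξ => by positivity))
    have h2 : Real.sqrt (∫ _ in B1, (1:ℝ)) = Real.sqrt Real.pi * kmin := by
      rw [setIntegral_const, smul_eq_mul, mul_one, hvolB1,
        Real.sqrt_mul Real.pi_nonneg, Real.sqrt_sq hkmin.le]
    calc ∫ ξ in B1, ‖F ξ‖ ≤ Real.sqrt (∫ ξ in B1, ‖F ξ‖ ^ 2) * Real.sqrt (∫ _ in B1, (1:ℝ)) := h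
      _ ≤ Real.sqrt (∫ ξ, ‖F ξ‖ ^ 2) * (Real.sqrt Real.pi * kmin) := by
          rw [h2]
          exact mul_le_mul_of_nonneg_right h1 (by positivity)
  -- Cauchy–Schwarz on B2
  have hcs2 : ∫ ξ in B2, ‖F ξ‖ ≤
      Real.sqrt (∫ ξ, (1 + ‖ξ‖ ^ 2) ^ 2 * ‖F ξ‖ ^ 2) * (Real.sqrt Real.pi * kmax⁻¹) := by
    have hpt : ∀ ξ : E2, ‖F ξ‖ = ((1 + ‖ξ‖ ^ 2) * ‖F ξ‖) * ((1:ℝ) + ‖ξ‖ ^ 2)⁻¹ := by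
      intro ξ
      have hne : ((1:ℝ) + ‖ξ‖ ^ 2) ≠ 0 := by positivity
      field_simp
    have hf2sq : Integrable (fun ξ : E2 => ((1 + ‖ξ‖ ^ 2) * ‖F ξ‖) ^ 2)
        (volume.restrict B2) :=
      (hH2.congr (Filter.Eventually.of_forall fun ξ => by ring)).restrict
    have h := my_cs (μ := volume.restrict B2) (f := fun ξ => (1 + ‖ξ‖ ^ 2) * ‖F ξ‖)
      (g := fun ξ => ((1:ℝ) + ‖ξ‖ ^ 2)⁻¹)
      (fun ξ => mul_nonneg (by positivity) (norm_nonneg _)) (fun ξ => by positivity)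
      hf2sq weight_integrable.restrict
      (((hqhat_int.norm.aestronglyMeasurable).restrict).congr
        (Filter.Eventually.of_forall fun ξ => hpt ξ))
    have hlhs : (∫ ξ in B2, ((1 + ‖ξ‖ ^ 2) * ‖F ξ‖) * ((1:ℝ) + ‖ξ‖ ^ 2)⁻¹) =
        ∫ ξ in B2, ‖F ξ‖ :=
      integral_congr_ae (Filter.Eventually.of_forall fun ξ => (hpt ξ).symm)
    rw [hlhs] at h
    have h1 : Real.sqrt (∫ ξ in B2, ((1 + ‖ξ‖ ^ 2) * ‖F ξ‖) ^ 2) ≤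
        Real.sqrt (∫ ξ, (1 + ‖ξ‖ ^ 2) ^ 2 * ‖F ξ‖ ^ 2) := by
      apply Real.sqrt_le_sqrt
      have heq : (∫ ξ in B2, ((1 + ‖ξ‖ ^ 2) * ‖F ξ‖) ^ 2) =
          ∫ ξ in B2, (1 + ‖ξ‖ ^ 2) ^ 2 * ‖F ξ‖ ^ 2 :=
        integral_congr_ae (Filter.Eventually.of_forall fun ξ => by ring)
      rw [heq]
      exact setIntegral_le_integral hH2 (Filter.Eventually.of_forall fun ξ => by positivity)
    have h2 : Real.sqrt (∫ ξ in B2, (((1:ℝ) + ‖ξ‖ ^ 2)⁻¹) ^ 2) ≤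
        Real.sqrt Real.pi * kmax⁻¹ := by
      have := tail_integral (k := kmax) hkmax
      calc Real.sqrt (∫ ξ in B2, (((1:ℝ) + ‖ξ‖ ^ 2)⁻¹) ^ 2)
          ≤ Real.sqrt (Real.pi * (kmax⁻¹) ^ 2) := Real.sqrt_le_sqrt this
        _ = Real.sqrt Real.pi * kmax⁻¹ := by
            rw [Real.sqrt_mul Real.pi_nonneg, Real.sqrt_sq (by positivity)]
    calc ∫ ξ in B2, ‖F ξ‖ ≤ Real.sqrt (∫ ξ in B2, ((1 + ‖ξ‖ ^ 2) * ‖F ξ‖) ^ 2) *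
          Real.sqrt (∫ ξ in B2, (((1:ℝ) + ‖ξ‖ ^ 2)⁻¹) ^ 2) := h
      _ ≤ Real.sqrt (∫ ξ, (1 + ‖ξ‖ ^ 2) ^ 2 * ‖F ξ‖ ^ 2) * (Real.sqrt Real.pi * kmax⁻¹) :=
          mul_le_mul h1 h2 (Real.sqrt_nonneg _) (Real.sqrt_nonneg _)
  -- assemble
  have hnormint : ∀ s : Set E2, ‖∫ ξ in s, Φ ξ‖ ≤ ∫ ξ in s, ‖F ξ‖ := by
    intro s
    refine (norm_integral_le_integral_norm _).trans_eq ?_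
    exact integral_congr_ae (Filter.Eventually.of_forall fun ξ => hnorm ξ)
  have hcnorm : ‖((2 * Real.pi : ℂ) ^ 2)⁻¹‖ = (((2 * Real.pi) ^ 2)⁻¹ : ℝ) := by
    rw [norm_inv, norm_pow]
    have : ((2 : ℂ) * (Real.pi : ℂ)) = ((2 * Real.pi : ℝ) : ℂ) := by push_cast; ring
    rw [this, Complex.norm_real, Real.norm_eq_abs, abs_of_pos (by positivity)]
  rw [key, norm_mul, hcnorm]
  have hc0 : (0:ℝ) ≤ (((2 * Real.pi) ^ 2)⁻¹ : ℝ) := by positivity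
  calc (((2 * Real.pi) ^ 2)⁻¹ : ℝ) * ‖(∫ ξ in B1, Φ ξ) + ∫ ξ in B2, Φ ξ‖
      ≤ (((2 * Real.pi) ^ 2)⁻¹ : ℝ) * ((∫ ξ in B1, ‖F ξ‖) + ∫ ξ in B2, ‖F ξ‖) := by
        refine mul_le_mul_of_nonneg_left ?_ hc0
        exact (norm_add_le _ _).trans (add_le_add (hnormint B1) (hnormint B2))
    _ ≤ (((2 * Real.pi) ^ 2)⁻¹ : ℝ) *
          (Real.sqrt (∫ ξ, ‖F ξ‖ ^ 2) * (Real.sqrt Real.pi * kmin) +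
            Real.sqrt (∫ ξ, (1 + ‖ξ‖ ^ 2) ^ 2 * ‖F ξ‖ ^ 2) * (Real.sqrt Real.pi * kmax⁻¹)) := by
        exact mul_le_mul_of_nonneg_left (add_le_add hcs1 hcs2) hc0
    _ = Real.sqrt Real.pi *
        (kmax⁻¹ * (((2 * Real.pi) ^ 2)⁻¹ *
            Real.sqrt (∫ ξ, (1 + ‖ξ‖ ^ 2) ^ 2 * ‖F ξ‖ ^ 2)) +
          kmin * (((2 * Real.pi) ^ 2)⁻¹ * Real.sqrt (∫ ξ, ‖F ξ‖ ^ 2))) := by ring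

end Main
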